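/- Let W be a vector lattice carrying a faithful positive linear functional ψ (i.e., ψ(a) > 0 for all a in W₊ \ {0}). Suppose W is monotone sequentially complete (every upper bounded increasing sequence has a supremum). Let J be a nonempty upward directed subset of W that is upper bounded. If (jₙ) is an increasing sequence in J with supₙ ψ(jₙ) = sup_{j∈J} ψ(j), then supₙ jₙ exists in W and equals the supremum of J in W. -/
import Mathlib


/-- Monotone selection principle, core computation: if `(jₙ)` is an increasing
sequence in a nonempty upward directed upper bounded set `J` in a monotone
sequentially complete vector lattice with faithful positive linear functional `ψ`,
and `supₙ ψ(jₙ) = sup_{j∈J} ψ(j)`, then `supₙ jₙ` exists and equals `sup J`. -/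
theorem stmt_0 {W : Type*} [Lattice W] [AddCommGroup W] [Module ℝ W]
    [CovariantClass W W (· + ·) (· ≤ ·)] [PosSMulMono ℝ W]
    (ψ : W →ₗ[ℝ] ℝ)
    (hψpos : ∀ a : W, 0 ≤ a → 0 ≤ ψ a)
    (hψfaith : ∀ a : W, 0 ≤ a → a ≠ 0 → 0 < ψ a)
    (hseq : ∀ f : ℕ → W, Monotone f → BddAbove (Set.range f) →
      ∃ s, IsLUB (Set.range f) s)
    (J : Set W) (hJne : J.Nonempty) (hJdir : DirectedOn (· ≤ ·) J)
    (hJbdd : BddAbove J)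
    (j : ℕ → W) (hjJ : ∀ n, j n ∈ J) (hjmono : Monotone j)
    (hsup : (⨆ n, ψ (j n)) = sSup (ψ '' J)) :
    ∃ s : W, IsLUB (Set.range j) s ∧ IsLUB J s := by
  -- ψ is monotone
  have hψmono : ∀ a b : W, a ≤ b → ψ a ≤ ψ b := by
    intro a b hab
    have := hψpos (b - a) (by simpa using hab)
    simpa [map_sub] using this
  -- range j is bounded above
  obtain ⟨u, hu⟩ := hJbdd
  have hbdd : BddAbove (Set.range j) := by
    refine ⟨u, ?_⟩
    rintro _ ⟨n, rfl⟩
    exact hu (hjJ n)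
  obtain ⟨s, hs⟩ := hseq j hjmono hbdd
  refine ⟨s, hs, ?_, ?_⟩
  · -- s is an upper bound of J
    intro x hx
    -- consider b = (x - s)⁺
    set b : W := (x - s) ⊔ 0 with hb
    have hb0 : 0 ≤ b := le_sup_right
    -- ψ '' J bounded above
    have hbddψ : BddAbove (ψ '' J) := by
      refine ⟨ψ u, ?_⟩
      rintro _ ⟨a, ha, rfl⟩
      exact hψmono _ _ (hu ha)
    have hbddn : BddAbove (Set.range fun n => ψ (j n)) := by
      refine ⟨sSup (ψ '' J), ?_⟩
      rintro _ ⟨n, rfl⟩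
      exact le_csSup hbddψ ⟨j n, hjJ n, rfl⟩
    -- ψ b ≤ sSup (ψ '' J) - ψ (j n) for each n
    have key : ∀ n, ψ b ≤ sSup (ψ '' J) - ψ (j n) := by
      intro n
      have h1 : b ≤ (x - j n) ⊔ 0 := by
        apply sup_le_sup_right
        have := hs.1 (Set.mem_range_self n)
        exact sub_le_sub_left this x
      have h2 : (x - j n) ⊔ 0 = x ⊔ j n - j n := by
        rw [sup_sub]
        simp
      obtain ⟨k, hkJ, hxk, hjk⟩ := hJdir x hx (j n) (hjJ n)
      have h3 : x ⊔ j n ≤ k := sup_le hxk hjk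
      have h4 : ψ b ≤ ψ (x ⊔ j n) - ψ (j n) := by
        have := hψmono _ _ (h1.trans_eq h2)
        simpa [map_sub] using this
      have h5 : ψ (x ⊔ j n) ≤ sSup (ψ '' J) :=
        le_trans (hψmono _ _ h3) (le_csSup hbddψ ⟨k, hkJ, rfl⟩)
      linarith
    -- thus ψ b ≤ 0
    have hsupn : (⨆ n, ψ (j n)) ≤ sSup (ψ '' J) - ψ b := by
      apply ciSup_le
      intro n
      linarith [key n]
    rw [hsup] at hsupn
    have hψb0 : ψ b ≤ 0 := by linarith
    have : b = 0 := by
      by_contra hne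
      exact absurd (hψfaith b hb0 hne) (not_lt.mpr hψb0)
    -- b = 0 means x ≤ s
    have hxs : x - s ≤ 0 := by
      have h : x - s ≤ b := le_sup_left
      rw [‹b = 0›] at h
      exact h
    exact sub_nonpos.mp hxs
  · -- s is the least upper bound of J
    intro v hv
    apply hs.2
    rintro _ ⟨n, rfl⟩
    exact hv (hjJ n)
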